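/- arXiv:2304.13952 — 3 statements merged into one kernel-verified Lean document; each statement's English description precedes it below -/
import Mathlib

section
/- Let ν be a measure on ℝ^d (d ≥ 1) and suppose there exist constants c > 0, ρ₀ > 0 and α ∈ (0,2) such that for every unit vector η ∈ ℝ^d and every ρ ∈ (0, ρ₀], ∫_{|z| ≤ ρ} |η·z|² ν(dz) ≥ c ρ^{2−α}. Then for every ξ ∈ ℝ^d with |ξ| ≥ 1/ρ₀, one has ∫_{ℝ^d} (1 − cos(ξ·z)) ν(dz) ≥ (c/3) |ξ|^α. -/
open MeasureTheory ENNReal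

lemma one_sub_cos_ge (t : ℝ) (ht : |t| ≤ 1) : t ^ 2 / 3 ≤ 1 - Real.cos t := by
  wlog h : 0 ≤ t generalizing t
  · have := this (-t) (by rwa [abs_neg]) (by linarith [lt_of_not_ge h])
    simpa using this
  rcases eq_or_lt_of_le h with h0 | h0
  · simp [← h0]
  · have ht1 : t ≤ 1 := (abs_le.mp ht).2
    have hs := Real.sin_gt_sub_cube (by linarith : 0 < t / 2)
    have hcos : 1 - Real.cos t = 2 * Real.sin (t / 2) ^ 2 := by
      have h := Real.sin_sq_eq_half_sub (t / 2)
      rw [mul_div_cancel₀ t two_ne_zero] at h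
      linarith
    rw [hcos]
    have hpos : 0 < t / 2 - (t / 2) ^ 3 / 4 := by nlinarith [sq_nonneg t]
    have hsa : t / 2 - (t / 2) ^ 3 / 4 ≤ Real.sin (t / 2) := by
      have : 0 ≤ (t / 2) ^ 3 := by positivity
      linarith [hs]
    have hsq : (t / 2 - (t / 2) ^ 3 / 4) ^ 2 ≤ Real.sin (t / 2) ^ 2 :=
      pow_le_pow_left₀ hpos.le hsa 2
    have ht2 : t ^ 2 ≤ 1 := pow_le_one₀ h ht1
    have h4 : t ^ 4 ≤ t ^ 2 := by nlinarith [sq_nonneg t]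
    nlinarith [sq_nonneg (t ^ 3), sq_nonneg t]

theorem nondegeneracy_implies_symbol_lower_bound {d : ℕ} (hd : 1 ≤ d)
    (ν : Measure (EuclideanSpace ℝ (Fin d))) (c ρ₀ α : ℝ)
    (hc : 0 < c) (hρ₀ : 0 < ρ₀) (hα0 : 0 < α) (hα2 : α < 2)
    (hnd : ∀ η : EuclideanSpace ℝ (Fin d), ‖η‖ = 1 → ∀ ρ : ℝ, 0 < ρ → ρ ≤ ρ₀ →
      ENNReal.ofReal (c * ρ ^ (2 - α)) ≤
        ∫⁻ z in {z | ‖z‖ ≤ ρ}, ENNReal.ofReal ((inner ℝ η z : ℝ) ^ 2) ∂ν) :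
    ∀ ξ : EuclideanSpace ℝ (Fin d), 1 / ρ₀ ≤ ‖ξ‖ →
      ENNReal.ofReal (c / 3 * ‖ξ‖ ^ α) ≤
        ∫⁻ z, ENNReal.ofReal (1 - Real.cos (inner ℝ ξ z : ℝ)) ∂ν := by
  intro ξ hξ
  have hξpos : 0 < ‖ξ‖ := lt_of_lt_of_le (by positivity) hξ
  set ρ : ℝ := ‖ξ‖⁻¹ with hρdef
  have hρpos : 0 < ρ := by positivity
  have hρle : ρ ≤ ρ₀ := by
    rw [hρdef, inv_le_comm₀ hξpos hρ₀]
    simpa [one_div] using hξ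
  set η : EuclideanSpace ℝ (Fin d) := ‖ξ‖⁻¹ • ξ with hηdef
  have hη : ‖η‖ = 1 := by
    rw [hηdef, norm_smul, norm_inv, norm_norm, inv_mul_cancel₀ hξpos.ne']
  have hset : MeasurableSet {z : EuclideanSpace ℝ (Fin d) | ‖z‖ ≤ ρ} :=
    (isClosed_le continuous_norm continuous_const).measurableSet
  have key : ∀ z ∈ {z : EuclideanSpace ℝ (Fin d) | ‖z‖ ≤ ρ},
      ENNReal.ofReal (‖ξ‖ ^ 2 / 3) * ENNReal.ofReal ((inner ℝ η z : ℝ) ^ 2) ≤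
        ENNReal.ofReal (1 - Real.cos (inner ℝ ξ z : ℝ)) := by
    intro z hz
    rw [← ENNReal.ofReal_mul (by positivity)]
    apply ENNReal.ofReal_le_ofReal
    have hiz : (inner ℝ η z : ℝ) = ‖ξ‖⁻¹ * (inner ℝ ξ z : ℝ) := by
      rw [hηdef, real_inner_smul_left]
    have habs : |(inner ℝ ξ z : ℝ)| ≤ 1 := by
      have h1 := abs_real_inner_le_norm ξ z
      have h2 : ‖ξ‖ * ‖z‖ ≤ ‖ξ‖ * ρ := by
        exact mul_le_mul_of_nonneg_left hz hξpos.le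
      have : ‖ξ‖ * ρ = 1 := by rw [hρdef, mul_inv_cancel₀ hξpos.ne']
      linarith
    have := one_sub_cos_ge _ habs
    rw [hiz]
    have : ‖ξ‖ ^ 2 / 3 * (‖ξ‖⁻¹ * (inner ℝ ξ z : ℝ)) ^ 2 = (inner ℝ ξ z : ℝ) ^ 2 / 3 := by
      field_simp
    rw [this]
    exact one_sub_cos_ge _ habs
  calc ENNReal.ofReal (c / 3 * ‖ξ‖ ^ α)
      = ENNReal.ofReal (‖ξ‖ ^ 2 / 3) * ENNReal.ofReal (c * ρ ^ (2 - α)) := by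
        rw [← ENNReal.ofReal_mul (by positivity)]
        congr 1
        rw [hρdef, Real.inv_rpow (norm_nonneg _), ← Real.rpow_neg (norm_nonneg _)]
        have h2 : ‖ξ‖ ^ 2 * ‖ξ‖ ^ (-(2 - α)) = ‖ξ‖ ^ α := by
          rw [← Real.rpow_natCast ‖ξ‖ 2, ← Real.rpow_add hξpos]
          norm_num
        linear_combination (-(c / 3)) * h2
      _ ≤ ENNReal.ofReal (‖ξ‖ ^ 2 / 3) *
          ∫⁻ z in {z | ‖z‖ ≤ ρ}, ENNReal.ofReal ((inner ℝ η z : ℝ) ^ 2) ∂ν :=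
        mul_le_mul_right (hnd η hη ρ hρpos hρle) _
      _ = ∫⁻ z in {z | ‖z‖ ≤ ρ},
            ENNReal.ofReal (‖ξ‖ ^ 2 / 3) * ENNReal.ofReal ((inner ℝ η z : ℝ) ^ 2) ∂ν :=
        (lintegral_const_mul' _ _ ENNReal.ofReal_ne_top).symm
      _ ≤ ∫⁻ z in {z | ‖z‖ ≤ ρ}, ENNReal.ofReal (1 - Real.cos (inner ℝ ξ z : ℝ)) ∂ν :=
        setLIntegral_mono' hset key
      _ ≤ ∫⁻ z, ENNReal.ofReal (1 - Real.cos (inner ℝ ξ z : ℝ)) ∂ν :=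
        setLIntegral_le_lintegral _ _
end

section
/- Let f : ℝ^d → ℝ be differentiable with ‖∇f‖_∞ ≤ G and with s-Hölder continuous gradient with constant K. Then for all x, y, z ∈ ℝ^d: |f(x+z) − f(x) − f(y+z) + f(y)| ≤ max(2G, K) · |x − y| · min(1, |z|^s). -/
theorem second_difference_holder_bounded {d : ℕ} (f : EuclideanSpace ℝ (Fin d) → ℝ)
    (s K G : ℝ) (hs0 : 0 < s) (hs1 : s ≤ 1) (hK : 0 ≤ K) (hG : 0 ≤ G)
    (hdiff : Differentiable ℝ f)
    (hgrad : ∀ x, ‖fderiv ℝ f x‖ ≤ G)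
    (hholder : ∀ x y, ‖fderiv ℝ f x - fderiv ℝ f y‖ ≤ K * ‖x - y‖ ^ s) :
    ∀ x y z, |f (x + z) - f x - f (y + z) + f y| ≤
      max (2 * G) K * ‖x - y‖ * min 1 (‖z‖ ^ s) := by
  intro x y z
  have hxy : (0:ℝ) ≤ ‖x - y‖ := norm_nonneg _
  rcases le_total (‖z‖ ^ s) 1 with hz | hz
  · -- small z: use g t = f(t+z) - f t, with derivative fderiv f (t+z) - fderiv f t
    have hmin : min 1 (‖z‖ ^ s) = ‖z‖ ^ s := min_eq_right hz
    have hder : ∀ t : EuclideanSpace ℝ (Fin d),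
        HasFDerivAt (fun t => f (t + z) - f t)
          (fderiv ℝ f (t + z) - fderiv ℝ f t) t := by
      intro t
      have h1 : HasFDerivAt (fun t => f (t + z)) (fderiv ℝ f (t + z)) t := by
        have := ((hdiff (t + z)).hasFDerivAt).comp t
          ((hasFDerivAt_id t).add_const z)
        simpa [Function.comp_def] using this
      exact h1.sub (hdiff t).hasFDerivAt
    have hb : ∀ t : EuclideanSpace ℝ (Fin d),
        ‖fderiv ℝ f (t + z) - fderiv ℝ f t‖ ≤ K * ‖z‖ ^ s := by
      intro t
      have := hholder (t + z) t
      simpa using this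
    have key : ‖(f (x + z) - f x) - (f (y + z) - f y)‖ ≤ K * ‖z‖ ^ s * ‖x - y‖ := by
      have := convex_univ.norm_image_sub_le_of_norm_hasFDerivWithin_le
        (f := fun t => f (t + z) - f t)
        (f' := fun t => fderiv ℝ f (t + z) - fderiv ℝ f t)
        (C := K * ‖z‖ ^ s)
        (fun t _ => (hder t).hasFDerivWithinAt) (fun t _ => hb t)
        (Set.mem_univ y) (Set.mem_univ x)
      simpa using this
    have : |f (x + z) - f x - f (y + z) + f y| ≤ K * ‖z‖ ^ s * ‖x - y‖ := by
      have e : f (x + z) - f x - f (y + z) + f y =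
          (f (x + z) - f x) - (f (y + z) - f y) := by ring
      rw [e]; exact key
    calc |f (x + z) - f x - f (y + z) + f y| ≤ K * ‖z‖ ^ s * ‖x - y‖ := this
      _ ≤ max (2 * G) K * ‖x - y‖ * min 1 (‖z‖ ^ s) := by
        rw [hmin]
        have h1 : K ≤ max (2 * G) K := le_max_right _ _
        have h2 : (0:ℝ) ≤ ‖z‖ ^ s := Real.rpow_nonneg (norm_nonneg z) s
        nlinarith [mul_nonneg (mul_nonneg (sub_nonneg.2 h1) hxy) h2]
  · -- large z: min = 1, use Lipschitz bound
    have hmin : min 1 (‖z‖ ^ s) = 1 := min_eq_left hz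
    have lip : ∀ a b : EuclideanSpace ℝ (Fin d), ‖f a - f b‖ ≤ G * ‖a - b‖ := by
      intro a b
      exact convex_univ.norm_image_sub_le_of_norm_hasFDerivWithin_le
        (f' := fun t => fderiv ℝ f t)
        (fun t _ => (hdiff t).hasFDerivAt.hasFDerivWithinAt) (fun t _ => hgrad t)
        (Set.mem_univ b) (Set.mem_univ a)
    have h1 := lip (x + z) (y + z)
    have h2 := lip x y
    have e1 : (x + z) - (y + z) = x - y := by abel
    rw [e1] at h1
    have : |f (x + z) - f x - f (y + z) + f y| ≤ 2 * G * ‖x - y‖ := by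
      have := abs_sub_abs_le_abs_sub (f (x+z)) (f (y+z))
      calc |f (x + z) - f x - f (y + z) + f y|
          = |(f (x + z) - f (y + z)) - (f x - f y)| := by ring_nf
        _ ≤ |f (x + z) - f (y + z)| + |f x - f y| := abs_sub _ _
        _ ≤ G * ‖x - y‖ + G * ‖x - y‖ := add_le_add h1 h2
        _ = 2 * G * ‖x - y‖ := by ring
    calc |f (x + z) - f x - f (y + z) + f y| ≤ 2 * G * ‖x - y‖ := this
      _ ≤ max (2 * G) K * ‖x - y‖ * min 1 (‖z‖ ^ s) := by
        rw [hmin]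
        nlinarith [le_max_left (2*G) K, hxy]
end

section
/- For every p ≥ 2 and every measurable g : ℝ^d → ℝ with g ∈ L^p, and every finite symmetric measure ν on ℝ^d, defining Lg(x) = ∫ (g(x+z) − g(x)) ν(dz), it holds that ∫_{ℝ^d} |g(x)|^{p−2} g(x) Lg(x) dx ≤ (2/p) ∫_{ℝ^d} |g(x)|^{p/2} L(|g|^{p/2})(x) dx. -/
open MeasureTheory

-- Young-type: u^s * v^t ≤ u^(s+t) + v^(s+t)
lemma young_aux {u v s t : ℝ} (hu : 0 ≤ u) (hv : 0 ≤ v) (hs : 0 ≤ s) (ht : 0 ≤ t)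
    (hst : s + t ≠ 0) : u ^ s * v ^ t ≤ u ^ (s + t) + v ^ (s + t) := by
  rcases le_total v u with h | h
  · have h1 : v ^ t ≤ u ^ t := Real.rpow_le_rpow hv h ht
    have h2 : u ^ s * v ^ t ≤ u ^ s * u ^ t :=
      mul_le_mul_of_nonneg_left h1 (Real.rpow_nonneg hu s)
    calc u ^ s * v ^ t ≤ u ^ s * u ^ t := h2
      _ = u ^ (s + t) := (Real.rpow_add' hu hst).symm
      _ ≤ u ^ (s + t) + v ^ (s + t) := le_add_of_nonneg_right (Real.rpow_nonneg hv _)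
  · have h1 : u ^ s ≤ v ^ s := Real.rpow_le_rpow hu h hs
    have h2 : u ^ s * v ^ t ≤ v ^ s * v ^ t :=
      mul_le_mul_of_nonneg_right h1 (Real.rpow_nonneg hv t)
    calc u ^ s * v ^ t ≤ v ^ s * v ^ t := h2
      _ = v ^ (s + t) := (Real.rpow_add' hv hst).symm
      _ ≤ u ^ (s + t) + v ^ (s + t) := le_add_of_nonneg_left (Real.rpow_nonneg hu _)

-- tangent line inequality for b > 0, a ≥ 0
lemma tangent_pos {q a b : ℝ} (hq : 1 ≤ q) (hb : 0 < b) (ha : 0 ≤ a) :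
    q * b ^ (q - 1) * (a - b) ≤ a ^ q - b ^ q := by
  have hs : (-1 : ℝ) ≤ a / b - 1 := by
    have : 0 ≤ a / b := div_nonneg ha hb.le
    linarith
  have hber := one_add_mul_self_le_rpow_one_add hs hq
  have h1 : (1 + (a / b - 1)) = a / b := by ring
  rw [h1] at hber
  have hbq : 0 < b ^ q := Real.rpow_pos_of_pos hb q
  have h2 : (a / b) ^ q = a ^ q / b ^ q := Real.div_rpow ha hb.le q
  rw [h2] at hber
  have h3 := mul_le_mul_of_nonneg_right hber hbq.le
  have h4 : a ^ q / b ^ q * b ^ q = a ^ q := div_mul_cancel₀ _ hbq.ne'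
  rw [h4] at h3
  have h5 : b ^ (q - 1) * b = b ^ q := by
    have h := Real.rpow_add hb (q - 1) 1
    rw [show q - 1 + 1 = q by ring, Real.rpow_one] at h
    exact h.symm
  -- h3 : (1 + q * (a / b - 1)) * b ^ q ≤ a ^ q
  have h6 : (1 + q * (a / b - 1)) * b ^ q = b ^ q + q * (b ^ (q-1) * (a - b)) := by
    have : b ^ q = b ^ (q - 1) * b := h5.symm
    field_simp
    ring_nf
    rw [this]
    ring
  rw [h6] at h3
  linarith

-- general tangent line inequality
lemma tangent_gen {q : ℝ} (hq : 1 ≤ q) (a b : ℝ) :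
    q * (|b| ^ (q - 2) * b) * (a - b) ≤ |a| ^ q - |b| ^ q := by
  have key : ∀ a b : ℝ, 0 < b → q * (|b| ^ (q - 2) * b) * (a - b) ≤ |a| ^ q - |b| ^ q := by
    intro a b hb
    have habs : |b| = b := abs_of_pos hb
    rw [habs]
    have h1 : b ^ (q - 2) * b = b ^ (q - 1) := by
      have h := Real.rpow_add hb (q - 2) 1
      rw [show q - 2 + 1 = q - 1 by ring, Real.rpow_one] at h
      exact h.symm
    rw [h1]
    have h2 : q * b ^ (q - 1) * (a - b) ≤ q * b ^ (q - 1) * (|a| - b) := by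
      apply mul_le_mul_of_nonneg_left (by linarith [le_abs_self a])
      positivity
    exact h2.trans (tangent_pos hq hb (abs_nonneg a))
  rcases lt_trichotomy b 0 with hb | hb | hb
  · have := key (-a) (-b) (by linarith)
    simp only [abs_neg] at this
    have e1 : q * (|b| ^ (q - 2) * -b) * (-a - -b) = q * (|b| ^ (q - 2) * b) * (a - b) := by ring
    rw [e1] at this
    exact this
  · subst hb
    simp only [mul_zero, abs_zero, zero_mul, mul_zero, zero_sub]
    rw [Real.zero_rpow (by linarith : q ≠ 0)]
    have := Real.rpow_nonneg (abs_nonneg a) q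
    nlinarith [Real.rpow_nonneg (abs_nonneg a) q]
  · exact key a b hb

-- main pointwise inequality
lemma pointwise_ineq {p : ℝ} (hp : 2 ≤ p) (a b : ℝ) :
    |b| ^ (p - 2) * b * (a - b) ≤ 2 / p * (|b| ^ (p / 2) * (|a| ^ (p / 2) - |b| ^ (p / 2))) := by
  have hp0 : 0 < p := by linarith
  rcases eq_or_ne b 0 with rfl | hb
  · simp only [mul_zero, zero_mul, abs_zero, sub_zero, mul_comm]
    rw [Real.zero_rpow (by positivity : p / 2 ≠ 0)]
    simp
  · have hq : 1 ≤ p / 2 := by linarith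
    have h := tangent_gen hq a b
    have habs : 0 < |b| := abs_pos.mpr hb
    have h2 := mul_le_mul_of_nonneg_left h (by positivity : 0 ≤ 2 / p * |b| ^ (p / 2))
    calc |b| ^ (p - 2) * b * (a - b)
        = 2 / p * |b| ^ (p / 2) * (p / 2 * (|b| ^ (p / 2 - 2) * b) * (a - b)) := by
          have h := Real.rpow_add habs (p / 2) (p / 2 - 2)
          rw [show p / 2 + (p / 2 - 2) = p - 2 by ring] at h
          rw [h]
          field_simp
      _ ≤ 2 / p * |b| ^ (p / 2) * (|a| ^ (p / 2) - |b| ^ (p / 2)) := h2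
      _ = 2 / p * (|b| ^ (p / 2) * (|a| ^ (p / 2) - |b| ^ (p / 2))) := by ring

lemma aux1 {p u v : ℝ} (hp : 2 ≤ p) (hu : 0 ≤ u) (hv : 0 ≤ v) :
    u ^ (p - 2) * u * v ≤ u ^ p + v ^ p := by
  have h1 : u ^ (p - 2) * u = u ^ (p - 1) := by
    rcases eq_or_lt_of_le hu with h | h
    · rw [← h, Real.zero_rpow (show p - 1 ≠ 0 by intro hc; rw [sub_eq_zero] at hc; linarith)]
      ring
    · have h2 := Real.rpow_add h (p - 2) 1
      rw [show p - 2 + 1 = p - 1 by ring, Real.rpow_one] at h2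
      exact h2.symm
  rw [h1]
  have h3 := young_aux hu hv (show (0:ℝ) ≤ p - 1 by linarith) zero_le_one
    (show p - 1 + 1 ≠ 0 by intro hc; linarith)
  simpa [Real.rpow_one, show p - 1 + 1 = p by ring] using h3

lemma aux2 {p u v : ℝ} (hp : 2 ≤ p) (hu : 0 ≤ u) (hv : 0 ≤ v) :
    u ^ (p / 2) * v ^ (p / 2) ≤ u ^ p + v ^ p := by
  have h3 := young_aux hu hv (show (0:ℝ) ≤ p / 2 by linarith) (show (0:ℝ) ≤ p / 2 by linarith)
    (show p / 2 + p / 2 ≠ 0 by intro hc; linarith)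
  simpa [show p / 2 + p / 2 = p by ring] using h3


theorem moser_type_inequality {d : ℕ} (ν : Measure (EuclideanSpace ℝ (Fin d)))
    [IsFiniteMeasure ν] (hsym : ν.map (fun z => -z) = ν)
    (p : ℝ) (hp : 2 ≤ p) (g : EuclideanSpace ℝ (Fin d) → ℝ) (hmeas : Measurable g)
    (hbd : ∃ C : ℝ, ∀ x, |g x| ≤ C)
    (hLp : MeasureTheory.MemLp g (ENNReal.ofReal p)) :
    ∫ x, |g x| ^ (p - 2) * g x * (∫ z, (g (x + z) - g x) ∂ν) ≤
      (2 / p) * ∫ x, |g x| ^ (p / 2) * (∫ z, (|g (x + z)| ^ (p / 2) - |g x| ^ (p / 2)) ∂ν) := by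
  obtain ⟨C, hC⟩ := hbd
  have hC0 : 0 ≤ C := (abs_nonneg _).trans (hC 0)
  have hp0 : (0:ℝ) < p := by linarith
  have hq0 : (0:ℝ) < p / 2 := by linarith
  -- inner integrabilities
  have hint1 : ∀ x, Integrable (fun z => g (x + z) - g x) ν := by
    intro x
    refine Integrable.mono' (integrable_const (C + C))
      (Measurable.aestronglyMeasurable (by fun_prop)) (ae_of_all _ fun z => ?_)
    rw [Real.norm_eq_abs]
    calc |g (x + z) - g x| ≤ |g (x + z)| + |g x| := abs_sub _ _
      _ ≤ C + C := add_le_add (hC _) (hC _)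
  have hCq : ∀ y, |g y| ^ (p / 2) ≤ C ^ (p / 2) := fun y =>
    Real.rpow_le_rpow (abs_nonneg _) (hC y) hq0.le
  have habsq : ∀ y, |(|g y| ^ (p / 2))| = |g y| ^ (p / 2) := fun y =>
    abs_of_nonneg (Real.rpow_nonneg (abs_nonneg _) _)
  have hint2 : ∀ x, Integrable (fun z => |g (x + z)| ^ (p / 2) - |g x| ^ (p / 2)) ν := by
    intro x
    refine Integrable.mono' (integrable_const (C ^ (p / 2) + C ^ (p / 2)))
      (Measurable.aestronglyMeasurable (by fun_prop)) (ae_of_all _ fun z => ?_)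
    rw [Real.norm_eq_abs]
    calc |(|g (x + z)| ^ (p / 2) - |g x| ^ (p / 2))|
        ≤ |(|g (x + z)| ^ (p / 2))| + |(|g x| ^ (p / 2))| := abs_sub _ _
      _ ≤ C ^ (p / 2) + C ^ (p / 2) := by
          rw [habsq, habsq]; exact add_le_add (hCq _) (hCq _)
  have hint3 : ∀ x, Integrable (fun z => |g (x + z)| ^ p) ν := by
    intro x
    refine Integrable.mono' (integrable_const (C ^ p))
      (Measurable.aestronglyMeasurable (by fun_prop)) (ae_of_all _ fun z => ?_)
    rw [Real.norm_eq_abs, abs_of_nonneg (Real.rpow_nonneg (abs_nonneg _) _)]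
    exact Real.rpow_le_rpow (abs_nonneg _) (hC _) hp0.le
  -- pointwise inequality between the outer integrands
  have hpt : ∀ x, |g x| ^ (p - 2) * g x * (∫ z, (g (x + z) - g x) ∂ν) ≤
      2 / p * (|g x| ^ (p / 2) * ∫ z, (|g (x + z)| ^ (p / 2) - |g x| ^ (p / 2)) ∂ν) := by
    intro x
    calc |g x| ^ (p - 2) * g x * ∫ z, (g (x + z) - g x) ∂ν
        = ∫ z, |g x| ^ (p - 2) * g x * (g (x + z) - g x) ∂ν := (integral_const_mul _ _).symm
      _ ≤ ∫ z, 2 / p * (|g x| ^ (p / 2) * (|g (x + z)| ^ (p / 2) - |g x| ^ (p / 2))) ∂ν := by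
          refine integral_mono ((hint1 x).const_mul _) ?_ fun z => pointwise_ineq hp _ _
          simp only [← mul_assoc]
          exact (hint2 x).const_mul _
      _ = 2 / p * (|g x| ^ (p / 2) * ∫ z, (|g (x + z)| ^ (p / 2) - |g x| ^ (p / 2)) ∂ν) := by
          rw [← mul_assoc, ← integral_const_mul]
          simp only [mul_assoc]
  -- the dominating function M
  have Wint : Integrable (fun x => |g x| ^ p) volume := by
    have h := hLp.integrable_norm_rpow (by simp [ENNReal.ofReal_eq_zero]; linarith) (by simp)
    simpa [Real.norm_eq_abs, ENNReal.toReal_ofReal (by linarith : (0:ℝ) ≤ p)] using h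
  have prodInt : Integrable (fun xz : (EuclideanSpace ℝ (Fin d)) × (EuclideanSpace ℝ (Fin d)) =>
      |g (xz.1 + xz.2)| ^ p) (volume.prod ν) := by
    rw [integrable_prod_iff' (by exact Measurable.aestronglyMeasurable (by fun_prop))]
    constructor
    · exact ae_of_all _ fun z => Wint.comp_add_right z
    · have he : (fun z : EuclideanSpace ℝ (Fin d) => ∫ x, ‖|g (x + z)| ^ p‖ ∂volume)
          = fun _ => ∫ x, ‖|g x| ^ p‖ ∂volume :=
        funext fun z => integral_add_right_eq_self (fun x => ‖|g x| ^ p‖) z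
      rw [he]
      exact integrable_const _
  have Tint : Integrable (fun x => ∫ z, |g (x + z)| ^ p ∂ν) volume := prodInt.integral_prod_left
  have Mint : Integrable
      (fun x => (ν Set.univ).toReal * (3 * |g x| ^ p) + ∫ z, |g (x + z)| ^ p ∂ν) volume :=
    ((Wint.const_mul 3).const_mul _).add Tint
  have hDint : ∀ x, Integrable (fun z => 3 * |g x| ^ p + |g (x + z)| ^ p) ν := fun x =>
    (integrable_const _).add (hint3 x)
  have hDeq : ∀ x, ∫ z, (3 * |g x| ^ p + |g (x + z)| ^ p) ∂ν
      = (ν Set.univ).toReal * (3 * |g x| ^ p) + ∫ z, |g (x + z)| ^ p ∂ν := fun x => by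
    rw [integral_add (integrable_const _) (hint3 x), integral_const, smul_eq_mul]
    rfl
  -- bound for the left integrand
  have B1 : ∀ x, ‖|g x| ^ (p - 2) * g x * ∫ z, (g (x + z) - g x) ∂ν‖ ≤
      (ν Set.univ).toReal * (3 * |g x| ^ p) + ∫ z, |g (x + z)| ^ p ∂ν := by
    intro x
    rw [Real.norm_eq_abs, ← hDeq x, abs_mul]
    have hc : |(|g x| ^ (p - 2) * g x)| = |g x| ^ (p - 2) * |g x| := by
      rw [abs_mul, abs_of_nonneg (Real.rpow_nonneg (abs_nonneg _) _)]
    rw [hc]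
    have hI := norm_integral_le_integral_norm (μ := ν) (fun z => g (x + z) - g x)
    simp only [Real.norm_eq_abs] at hI
    calc |g x| ^ (p - 2) * |g x| * |∫ z, (g (x + z) - g x) ∂ν|
        ≤ |g x| ^ (p - 2) * |g x| * ∫ z, |g (x + z) - g x| ∂ν :=
          mul_le_mul_of_nonneg_left hI (by positivity)
      _ = ∫ z, |g x| ^ (p - 2) * |g x| * |g (x + z) - g x| ∂ν := (integral_const_mul _ _).symm
      _ ≤ ∫ z, (3 * |g x| ^ p + |g (x + z)| ^ p) ∂ν := by
          refine integral_mono ((hint1 x).abs.const_mul _) (hDint x) fun z => ?_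
          calc |g x| ^ (p - 2) * |g x| * |g (x + z) - g x|
              ≤ |g x| ^ (p - 2) * |g x| * (|g (x + z)| + |g x|) :=
                mul_le_mul_of_nonneg_left (abs_sub _ _) (by positivity)
            _ = |g x| ^ (p - 2) * |g x| * |g (x + z)| + |g x| ^ (p - 2) * |g x| * |g x| := by
                ring
            _ ≤ (|g x| ^ p + |g (x + z)| ^ p) + (|g x| ^ p + |g x| ^ p) :=
                add_le_add (aux1 hp (abs_nonneg _) (abs_nonneg _))
                  (aux1 hp (abs_nonneg _) (abs_nonneg _))
            _ = 3 * |g x| ^ p + |g (x + z)| ^ p := by ring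
  -- bound for the right integrand
  have B2 : ∀ x, ‖2 / p * (|g x| ^ (p / 2) *
      ∫ z, (|g (x + z)| ^ (p / 2) - |g x| ^ (p / 2)) ∂ν)‖ ≤
      (ν Set.univ).toReal * (3 * |g x| ^ p) + ∫ z, |g (x + z)| ^ p ∂ν := by
    intro x
    rw [Real.norm_eq_abs, ← hDeq x, abs_mul, abs_mul, habsq]
    have hcn : 0 ≤ |g x| ^ (p / 2) := Real.rpow_nonneg (abs_nonneg _) _
    have hI := norm_integral_le_integral_norm (μ := ν)
      (fun z => |g (x + z)| ^ (p / 2) - |g x| ^ (p / 2))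
    simp only [Real.norm_eq_abs] at hI
    calc |2 / p| * (|g x| ^ (p / 2) * |∫ z, (|g (x + z)| ^ (p / 2) - |g x| ^ (p / 2)) ∂ν|)
        ≤ 1 * (|g x| ^ (p / 2) * |∫ z, (|g (x + z)| ^ (p / 2) - |g x| ^ (p / 2)) ∂ν|) := by
          apply mul_le_mul_of_nonneg_right _ (by positivity)
          rw [abs_of_pos (by positivity), div_le_one hp0]; linarith
      _ = |g x| ^ (p / 2) * |∫ z, (|g (x + z)| ^ (p / 2) - |g x| ^ (p / 2)) ∂ν| := one_mul _
      _ ≤ |g x| ^ (p / 2) * ∫ z, |(|g (x + z)| ^ (p / 2) - |g x| ^ (p / 2))| ∂ν :=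
          mul_le_mul_of_nonneg_left hI hcn
      _ = ∫ z, |g x| ^ (p / 2) * |(|g (x + z)| ^ (p / 2) - |g x| ^ (p / 2))| ∂ν :=
          (integral_const_mul _ _).symm
      _ ≤ ∫ z, (3 * |g x| ^ p + |g (x + z)| ^ p) ∂ν := by
          refine integral_mono ((hint2 x).abs.const_mul _) (hDint x) fun z => ?_
          calc |g x| ^ (p / 2) * |(|g (x + z)| ^ (p / 2) - |g x| ^ (p / 2))|
              ≤ |g x| ^ (p / 2) * (|g (x + z)| ^ (p / 2) + |g x| ^ (p / 2)) := by
                apply mul_le_mul_of_nonneg_left _ hcn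
                calc |(|g (x + z)| ^ (p / 2) - |g x| ^ (p / 2))|
                    ≤ |(|g (x + z)| ^ (p / 2))| + |(|g x| ^ (p / 2))| := abs_sub _ _
                  _ = |g (x + z)| ^ (p / 2) + |g x| ^ (p / 2) := by rw [habsq, habsq]
            _ = |g x| ^ (p / 2) * |g (x + z)| ^ (p / 2) +
                |g x| ^ (p / 2) * |g x| ^ (p / 2) := by ring
            _ ≤ (|g x| ^ p + |g (x + z)| ^ p) + (|g x| ^ p + |g x| ^ p) :=
                add_le_add (aux2 hp (abs_nonneg _) (abs_nonneg _))
                  (aux2 hp (abs_nonneg _) (abs_nonneg _))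
            _ = 3 * |g x| ^ p + |g (x + z)| ^ p := by ring
  -- measurability of the outer integrands
  have m2 : StronglyMeasurable fun x : EuclideanSpace ℝ (Fin d) =>
      ∫ z, (g (x + z) - g x) ∂ν :=
    (Measurable.stronglyMeasurable
      (show Measurable fun xz : (EuclideanSpace ℝ (Fin d)) × (EuclideanSpace ℝ (Fin d)) =>
        g (xz.1 + xz.2) - g xz.1 by fun_prop)).integral_prod_right'
  have m2' : StronglyMeasurable fun x : EuclideanSpace ℝ (Fin d) =>
      ∫ z, (|g (x + z)| ^ (p / 2) - |g x| ^ (p / 2)) ∂ν :=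
    (Measurable.stronglyMeasurable
      (show Measurable fun xz : (EuclideanSpace ℝ (Fin d)) × (EuclideanSpace ℝ (Fin d)) =>
        |g (xz.1 + xz.2)| ^ (p / 2) - |g xz.1| ^ (p / 2) by fun_prop)).integral_prod_right'
  have hmf : AEStronglyMeasurable
      (fun x => |g x| ^ (p - 2) * g x * ∫ z, (g (x + z) - g x) ∂ν) volume :=
    (Measurable.aestronglyMeasurable
      (show Measurable fun x : EuclideanSpace ℝ (Fin d) => |g x| ^ (p - 2) * g x
        by fun_prop)).mul m2.aestronglyMeasurable
  have hmh : AEStronglyMeasurable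
      (fun x => 2 / p * (|g x| ^ (p / 2) *
        ∫ z, (|g (x + z)| ^ (p / 2) - |g x| ^ (p / 2)) ∂ν)) volume :=
    aestronglyMeasurable_const.mul
      ((Measurable.aestronglyMeasurable
        (show Measurable fun x : EuclideanSpace ℝ (Fin d) => |g x| ^ (p / 2)
          by fun_prop)).mul m2'.aestronglyMeasurable)
  have hIf : Integrable
      (fun x => |g x| ^ (p - 2) * g x * ∫ z, (g (x + z) - g x) ∂ν) volume :=
    Mint.mono' hmf (ae_of_all _ B1)
  have hIh : Integrable
      (fun x => 2 / p * (|g x| ^ (p / 2) *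
        ∫ z, (|g (x + z)| ^ (p / 2) - |g x| ^ (p / 2)) ∂ν)) volume :=
    Mint.mono' hmh (ae_of_all _ B2)
  rw [← integral_const_mul]
  exact integral_mono hIf hIh hpt
end
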